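/- Let b : ℝ → ℝ be locally Lipschitz, nonnegative and nondecreasing, let A, B ≥ 0, let g : [0, ∞) → ℝ be continuous, and let 0 < T < ∞. Suppose X : [0, T) → ℝ is continuous, satisfies X(t) = A + B·t + ∫_0^t (t − s) b(X(s)) ds + g(t) for all t ∈ [0, T), and blows up at time T in the sense that limsup_{t → T⁻} X(t) = +∞. Then T(α, β) := ∫_α^∞ ds / (β² + 2∫_α^s b(r) dr)^{1/2} is finite for all α > 0 and β > 0. -/

import Mathlib

open MeasureTheory Set Filter

section BlowupAux

open intervalIntegral

private lemma primitive_hasDerivAt {f : ℝ → ℝ} (hf : Continuous f) (a x : ℝ) :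
    HasDerivAt (fun t => ∫ s in a..t, f s) (f x) x :=
  intervalIntegral.integral_hasDerivAt_right (hf.intervalIntegrable a x)
    (hf.stronglyMeasurable.stronglyMeasurableAtFilter) hf.continuousAt

private lemma primitive_continuous {f : ℝ → ℝ} (hf : Continuous f) (a : ℝ) :
    Continuous (fun t => ∫ s in a..t, f s) :=
  intervalIntegral.continuous_primitive (fun _ _ => hf.intervalIntegrable _ _) a

private lemma primitive_mono {f : ℝ → ℝ} (hf : Continuous f) (hf0 : ∀ x, 0 ≤ f x) (a : ℝ) :
    Monotone (fun t => ∫ s in a..t, f s) :=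
  monotone_of_deriv_nonneg (fun x => (primitive_hasDerivAt hf a x).differentiableAt)
    (fun x => by rw [(primitive_hasDerivAt hf a x).deriv]; exact hf0 x)

private lemma key_bound
    (b : ℝ → ℝ) (hb_cont : Continuous b) (hb_nonneg : ∀ x, 0 ≤ b x) (hb_mono : Monotone b)
    (B β a0 : ℝ) (hB : 0 ≤ B) (hβ : 0 < β)
    (f : ℝ → ℝ) (hf_cont : Continuous f) (hf_nonneg : ∀ s, 0 ≤ f s)
    (t2 : ℝ) (ht2 : 0 ≤ t2)
    (hf_le : ∀ t ∈ Icc (0:ℝ) t2,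
      f t ≤ b (a0 + B * t + ∫ s in (0:ℝ)..t, (t - s) * f s)) :
    (∫ u in a0..(a0 + B * t2 + ∫ s in (0:ℝ)..t2, (t2 - s) * f s),
        1 / Real.sqrt (β ^ 2 + max (B ^ 2 + 2 * ∫ r in a0..u, b r) 0)) ≤ t2 := by
  set W : ℝ → ℝ := fun t => ∫ s in (0:ℝ)..t, f s with hW_def
  set V : ℝ → ℝ := fun t => ∫ s in (0:ℝ)..t, s * f s with hV_def
  have hVcont : Continuous (fun s : ℝ => s * f s) := continuous_id.mul hf_cont
  have hJ : ∀ t : ℝ, (∫ s in (0:ℝ)..t, (t - s) * f s) = t * W t - V t := by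
    intro t
    have : ∀ s : ℝ, (t - s) * f s = t * f s - s * f s := fun s => by ring
    simp_rw [this]
    rw [intervalIntegral.integral_sub (f := fun s => t * f s) (((continuous_const.mul hf_cont)).intervalIntegrable _ _)
      (hVcont.intervalIntegrable _ _), intervalIntegral.integral_const_mul]
  set φ : ℝ → ℝ := fun t => a0 + B * t + (t * W t - V t) with hφ_def
  have hφd : ∀ t : ℝ, HasDerivAt φ (B + W t) t := by
    intro t
    have h1 : HasDerivAt (fun t : ℝ => t * W t)
        (1 * W t + t * f t) t :=
      (hasDerivAt_id t).mul (primitive_hasDerivAt hf_cont 0 t)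
    have h2 : HasDerivAt V (t * f t) t := primitive_hasDerivAt hVcont 0 t
    have h3 : HasDerivAt (fun t : ℝ => a0 + B * t) B t := by
      exact ((hasDerivAt_const t a0).add ((hasDerivAt_id t).const_mul B)).congr_deriv (by ring)
    have := h3.add (h1.sub h2)
    exact this.congr_deriv (by ring)
  set G : ℝ → ℝ := fun y => ∫ r in a0..y, b r with hG_def
  have hGd : ∀ y : ℝ, HasDerivAt G (b y) y := fun y => primitive_hasDerivAt hb_cont a0 y
  have hGmono : Monotone G := primitive_mono hb_cont hb_nonneg a0
  have hGa0 : G a0 = 0 := intervalIntegral.integral_same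
  have hW0 : ∀ t : ℝ, 0 ≤ t → 0 ≤ W t := fun t ht =>
    intervalIntegral.integral_nonneg ht (fun s _ => hf_nonneg s)
  set E : ℝ → ℝ := fun t => (B + W t) ^ 2 - (B ^ 2 + 2 * G (φ t)) with hE_def
  have hEd : ∀ t : ℝ, HasDerivAt E
      (2 * (B + W t) ^ 1 * f t - 2 * (b (φ t) * (B + W t))) t := by
    intro t
    have h1 : HasDerivAt (fun t : ℝ => (B + W t) ^ 2) (2 * (B + W t) ^ 1 * f t) t := by
      have : HasDerivAt (fun t : ℝ => B + W t) (f t) t := by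
        exact ((hasDerivAt_const t B).add (primitive_hasDerivAt hf_cont 0 t)).congr_deriv (zero_add _)
      exact (this.pow 2).congr_deriv (by norm_num)
    have h2 : HasDerivAt (fun t : ℝ => B ^ 2 + 2 * G (φ t))
        (2 * (b (φ t) * (B + W t))) t := by
      have := ((hGd (φ t)).comp t (hφd t)).const_mul 2
      exact ((hasDerivAt_const t (B ^ 2)).add this).congr_deriv (zero_add _)
    exact h1.sub h2
  have hW00 : W 0 = 0 := intervalIntegral.integral_same
  have hV00 : V 0 = 0 := intervalIntegral.integral_same
  have hφ0 : φ 0 = a0 := by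
    show a0 + B * 0 + (0 * W 0 - V 0) = a0
    rw [hV00]; ring
  have hE0 : E 0 = 0 := by
    show (B + W 0) ^ 2 - (B ^ 2 + 2 * G (φ 0)) = 0
    rw [hW00, hφ0, hGa0]; ring
  have hEanti : AntitoneOn E (Icc 0 t2) := by
    apply antitoneOn_of_deriv_nonpos (convex_Icc 0 t2)
    · exact (fun t _ => ((hEd t).continuousAt.continuousWithinAt))
    · intro x hx
      exact ((hEd x).differentiableAt.differentiableWithinAt)
    · intro x hx
      rw [interior_Icc] at hx
      rw [(hEd x).deriv]
      have hxI : x ∈ Icc (0:ℝ) t2 := ⟨hx.1.le, hx.2.le⟩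
      have hfx : f x ≤ b (φ x) := by
        have := hf_le x hxI
        rwa [hJ x] at this
      have hWx : 0 ≤ B + W x := add_nonneg hB (hW0 x hx.1.le)
      nlinarith
  have hEle : ∀ t ∈ Icc (0:ℝ) t2, E t ≤ 0 := by
    intro t ht
    have := hEanti (left_mem_Icc.2 ht2) ht ht.1
    rwa [hE0] at this
  have hφmono : MonotoneOn φ (Icc 0 t2) := by
    apply monotoneOn_of_deriv_nonneg (convex_Icc 0 t2)
    · exact (fun t _ => ((hφd t).continuousAt.continuousWithinAt))
    · intro x hx
      exact ((hφd x).differentiableAt.differentiableWithinAt)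
    · intro x hx
      rw [interior_Icc] at hx
      rw [(hφd x).deriv]
      exact add_nonneg hB (hW0 x hx.1.le)
  -- the auxiliary integrand
  set hσ : ℝ → ℝ := fun u => 1 / Real.sqrt (β ^ 2 + max (B ^ 2 + 2 * G u) 0) with hσ_def
  have hden_pos : ∀ u : ℝ, 0 < β ^ 2 + max (B ^ 2 + 2 * G u) 0 := fun u =>
    lt_of_lt_of_le (pow_pos hβ 2) (le_add_of_nonneg_right (le_max_right _ _))
  have hsqrt_pos : ∀ u : ℝ, 0 < Real.sqrt (β ^ 2 + max (B ^ 2 + 2 * G u) 0) := fun u =>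
    Real.sqrt_pos.2 (hden_pos u)
  have hGcont : Continuous G := primitive_continuous hb_cont a0
  have hσ_cont : Continuous hσ := by
    apply continuous_const.div
    · exact Real.continuous_sqrt.comp
        (continuous_const.add ((continuous_const.add (continuous_const.mul hGcont)).max
          continuous_const))
    · exact fun u => (hsqrt_pos u).ne'
  have hσ_nonneg : ∀ u : ℝ, 0 ≤ hσ u := fun u => by
    rw [hσ_def]; positivity
  set Hs : ℝ → ℝ := fun v => ∫ u in a0..v, hσ u with hHs_def
  set ψ : ℝ → ℝ := fun t => Hs (φ t) - t with hψ_def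
  have hψd : ∀ t : ℝ, HasDerivAt ψ (hσ (φ t) * (B + W t) - 1) t := by
    intro t
    exact ((primitive_hasDerivAt hσ_cont a0 (φ t)).comp t (hφd t)).sub (hasDerivAt_id t)
  have hψanti : AntitoneOn ψ (Icc 0 t2) := by
    apply antitoneOn_of_deriv_nonpos (convex_Icc 0 t2)
    · exact fun t _ => (hψd t).continuousAt.continuousWithinAt
    · exact fun x _ => (hψd x).differentiableAt.differentiableWithinAt
    · intro x hx
      rw [interior_Icc] at hx
      rw [(hψd x).deriv]
      have hxI : x ∈ Icc (0:ℝ) t2 := ⟨hx.1.le, hx.2.le⟩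
      have hWx : 0 ≤ B + W x := add_nonneg hB (hW0 x hx.1.le)
      have hE : (B + W x) ^ 2 - (B ^ 2 + 2 * G (φ x)) ≤ 0 := hEle x hxI
      have hsq : (B + W x) ^ 2 ≤ β ^ 2 + max (B ^ 2 + 2 * G (φ x)) 0 := by
        have h1 : (B + W x) ^ 2 ≤ B ^ 2 + 2 * G (φ x) := by linarith
        exact h1.trans (le_trans (le_max_left _ _) (le_add_of_nonneg_left (sq_nonneg β)))
      have hle : B + W x ≤ Real.sqrt (β ^ 2 + max (B ^ 2 + 2 * G (φ x)) 0) :=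
        (Real.le_sqrt hWx (hden_pos (φ x)).le).2 hsq
      have : hσ (φ x) * (B + W x) ≤ 1 := by
        rw [hσ_def]
        rw [div_mul_eq_mul_div, one_mul, div_le_one (hsqrt_pos (φ x))]
        exact hle
      linarith
  have hfinal : ψ t2 ≤ ψ 0 := hψanti (left_mem_Icc.2 ht2) (right_mem_Icc.2 ht2) ht2
  have hψ0 : ψ 0 = 0 := by
    simp [hψ_def, hφ0, hHs_def, intervalIntegral.integral_same]
  rw [hψ0, hψ_def] at hfinal
  simp only [sub_nonpos] at hfinal
  calc (∫ u in a0..(a0 + B * t2 + ∫ s in (0:ℝ)..t2, (t2 - s) * f s), hσ u)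
      = Hs (φ t2) := by rw [hHs_def, hφ_def, hJ t2]
    _ ≤ t2 := by linarith [hfinal]

end BlowupAux

/-- `T(α,β) = ∫_α^∞ ds / (β² + 2∫_α^s b(r) dr)^{1/2}`, valued in `[0,∞]`
(with the convention `1/0 = ∞`, which is irrelevant here since the integrand's
denominator is positive when `β > 0`). -/
noncomputable def blowupTime (b : ℝ → ℝ) (α β : ℝ) : ENNReal :=
  ∫⁻ s in Set.Ioi α, ENNReal.ofReal (1 / Real.sqrt (β ^ 2 + 2 * ∫ r in α..s, b r))

/-- If a solution of `X(t) = A + Bt + ∫₀ᵗ (t-s) b(X(s)) ds + g(t)` blows up at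
the finite time `T` (i.e. `limsup_{t→T⁻} X(t) = +∞`), then `T(α,β) < ∞` for
all `α, β > 0`. -/
theorem blowup_implies_condition_B (b : ℝ → ℝ) (hb : LocallyLipschitz b)
    (hb_nonneg : ∀ x, 0 ≤ b x) (hb_mono : Monotone b)
    (A B T : ℝ) (hA : 0 ≤ A) (hB : 0 ≤ B) (hT : 0 < T)
    (g : ℝ → ℝ) (hg_cont : ContinuousOn g (Set.Ici 0))
    (X : ℝ → ℝ) (hX_cont : ContinuousOn X (Set.Ico 0 T))
    (hX_eq : ∀ t ∈ Set.Ico (0 : ℝ) T,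
      X t = A + B * t + (∫ s in (0 : ℝ)..t, (t - s) * b (X s)) + g t)
    (hX_blowup : ∀ M : ℝ, ∃ᶠ t in nhdsWithin T (Set.Iio T), M ≤ X t) :
    ∀ α β : ℝ, 0 < α → 0 < β → blowupTime b α β < ⊤ := by
  intro α β hα hβ
  have hb_cont : Continuous b := hb.continuous
  obtain ⟨C, hC⟩ : ∃ C : ℝ, ∀ t ∈ Icc (0:ℝ) T, g t ≤ C := by
    obtain ⟨C, hC⟩ := (isCompact_Icc.image_of_continuousOn
      (hg_cont.mono (fun x hx => hx.1))).bddAbove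
    exact ⟨C, fun t ht => hC (mem_image_of_mem g ht)⟩
  -- a convenient way to extract times close to T where X is large
  have hfreq : ∀ M : ℝ, ∃ t ∈ Ioo (0:ℝ) T, M ≤ X t := by
    intro M
    have hmem : Ioo (0:ℝ) T ∈ nhdsWithin T (Iio T) := by
      rw [show Ioo (0:ℝ) T = Ioi 0 ∩ Iio T from rfl]
      exact inter_mem (mem_nhdsWithin_of_mem_nhds (Ioi_mem_nhds hT)) self_mem_nhdsWithin
    obtain ⟨t, h1, h2⟩ :=
      ((hX_blowup M).and_eventually (eventually_of_mem hmem (fun x hx => hx))).exists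
    exact ⟨t, h2, h1⟩
  set a0 : ℝ := A + C with ha0
  set G : ℝ → ℝ := fun y => ∫ r in a0..y, b r with hG_def
  have hGmono : Monotone G := primitive_mono hb_cont hb_nonneg a0
  have hGcont : Continuous G := primitive_continuous hb_cont a0
  set hσ : ℝ → ℝ := fun u => 1 / Real.sqrt (β ^ 2 + max (B ^ 2 + 2 * G u) 0) with hσ_def
  have hden_pos : ∀ u : ℝ, 0 < β ^ 2 + max (B ^ 2 + 2 * G u) 0 := fun u =>
    lt_of_lt_of_le (pow_pos hβ 2) (le_add_of_nonneg_right (le_max_right _ _))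
  have hsqrt_pos : ∀ u : ℝ, 0 < Real.sqrt (β ^ 2 + max (B ^ 2 + 2 * G u) 0) := fun u =>
    Real.sqrt_pos.2 (hden_pos u)
  have hσ_cont : Continuous hσ := by
    apply continuous_const.div
    · exact Real.continuous_sqrt.comp
        (continuous_const.add ((continuous_const.add (continuous_const.mul hGcont)).max
          continuous_const))
    · exact fun u => (hsqrt_pos u).ne'
  have hσ_nonneg : ∀ u : ℝ, 0 ≤ hσ u := fun u => by
    rw [hσ_def]; positivity
  set Hs : ℝ → ℝ := fun v => ∫ u in a0..v, hσ u with hHs_def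
  have hHmono : Monotone Hs := primitive_mono hσ_cont hσ_nonneg a0
  -- the key a priori bound coming from the blow-up
  have hkey : ∀ v : ℝ, Hs v ≤ T := by
    intro v
    obtain ⟨t2, ht2, hvX⟩ := hfreq v
    set Y : ℝ → ℝ := fun s => X (max 0 (min s t2)) with hY_def
    have hclamp_mem : ∀ s : ℝ, max 0 (min s t2) ∈ Ico (0:ℝ) T := by
      intro s
      refine ⟨le_max_left _ _, max_lt hT (lt_of_le_of_lt (min_le_right s t2) ht2.2)⟩
    have hYcont : Continuous Y :=
      hX_cont.comp_continuous
        (continuous_const.max (continuous_id.min continuous_const)) hclamp_mem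
    set f : ℝ → ℝ := fun s => b (Y s) with hf_def
    have hf_cont : Continuous f := hb_cont.comp hYcont
    have hf_nonneg : ∀ s : ℝ, 0 ≤ f s := fun s => hb_nonneg _
    have hfeq : ∀ s ∈ Icc (0:ℝ) t2, f s = b (X s) := by
      intro s hs
      rw [hf_def, hY_def]
      simp only []
      rw [min_eq_left hs.2, max_eq_right hs.1]
    have hint_eq : ∀ t ∈ Icc (0:ℝ) t2,
        (∫ s in (0:ℝ)..t, (t - s) * f s) = ∫ s in (0:ℝ)..t, (t - s) * b (X s) := by
      intro t ht
      apply intervalIntegral.integral_congr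
      intro s hs
      rw [uIcc_of_le ht.1] at hs
      show (t - s) * f s = (t - s) * b (X s)
      rw [hfeq s ⟨hs.1, hs.2.trans ht.2⟩]
    have hXle : ∀ t ∈ Icc (0:ℝ) t2,
        X t ≤ a0 + B * t + ∫ s in (0:ℝ)..t, (t - s) * f s := by
      intro t ht
      have htT : t ∈ Ico (0:ℝ) T := ⟨ht.1, lt_of_le_of_lt ht.2 ht2.2⟩
      have hXt := hX_eq t htT
      rw [← hint_eq t ht] at hXt
      have hg : g t ≤ C := hC t ⟨ht.1, ht.2.trans ht2.2.le⟩
      rw [ha0]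
      linarith
    have hf_le : ∀ t ∈ Icc (0:ℝ) t2,
        f t ≤ b (a0 + B * t + ∫ s in (0:ℝ)..t, (t - s) * f s) := by
      intro t ht
      rw [hfeq t ht]
      exact hb_mono (hXle t ht)
    have hkb := key_bound b hb_cont hb_nonneg hb_mono B β a0 hB hβ f hf_cont hf_nonneg
      t2 ht2.1.le hf_le
    have hXt2 : v ≤ a0 + B * t2 + ∫ s in (0:ℝ)..t2, (t2 - s) * f s :=
      le_trans hvX (hXle t2 ⟨ht2.1.le, le_refl t2⟩)
    calc Hs v ≤ Hs (a0 + B * t2 + ∫ s in (0:ℝ)..t2, (t2 - s) * f s) := hHmono hXt2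
      _ ≤ t2 := hkb
      _ ≤ T := ht2.2.le
  -- now the tail argument
  by_cases hb0 : ∀ x, b x = 0
  · exfalso
    obtain ⟨t, ht, hXt⟩ := hfreq (A + B * T + C + 1)
    have hXe := hX_eq t ⟨ht.1.le, ht.2⟩
    have hzero : (∫ s in (0:ℝ)..t, (t - s) * b (X s)) = 0 := by
      simp [hb0]
    have hg : g t ≤ C := hC t ⟨ht.1.le, ht.2.le⟩
    have hBt : B * t ≤ B * T := mul_le_mul_of_nonneg_left ht.2.le hB
    rw [hzero] at hXe
    linarith
  · push_neg at hb0
    obtain ⟨y, hy⟩ := hb0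
    have hby : 0 < b y := lt_of_le_of_ne (hb_nonneg y) (Ne.symm hy)
    set L : ℝ := (B ^ 2 + 8 * |G α|) / 6 with hL_def
    have hL0 : 0 ≤ L := by rw [hL_def]; positivity
    set U : ℝ := max α (y + (L + |G y|) / b y) with hU_def
    have hαU : α ≤ U := le_max_left _ _
    have hyU : y ≤ U :=
      le_trans (le_add_of_nonneg_right (by positivity)) (le_max_right _ _)
    have hGU : L ≤ G U := by
      have h1 : (U - y) * b y ≤ ∫ r in y..U, b r := by
        have := intervalIntegral.integral_mono_on (μ := volume) hyU
          (_root_.intervalIntegrable_const (c := b y)) (hb_cont.intervalIntegrable y U)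
          (fun x hx => hb_mono hx.1)
        simpa [intervalIntegral.integral_const, smul_eq_mul] using this
      have h2 : G U - G y = ∫ r in y..U, b r :=
        intervalIntegral.integral_interval_sub_left (hb_cont.intervalIntegrable a0 U)
          (hb_cont.intervalIntegrable a0 y)
      have h3 : y + (L + |G y|) / b y ≤ U := le_max_right _ _
      have h4 : L + |G y| ≤ (U - y) * b y := by
        rw [← div_le_iff₀ hby]
        linarith
      have h5 : -|G y| ≤ G y := neg_abs_le _
      linarith
    have hD1 : ∀ s : ℝ, (∫ r in α..s, b r) = G s - G α := fun s =>
      (intervalIntegral.integral_interval_sub_left (hb_cont.intervalIntegrable a0 s)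
        (hb_cont.intervalIntegrable a0 α)).symm
    -- integrability of hσ on (U, ∞)
    have hHsU : ∀ w : ℝ, (∫ x in U..w, hσ x) = Hs w - Hs U := fun w =>
      (intervalIntegral.integral_interval_sub_left (hσ_cont.intervalIntegrable a0 w)
        (hσ_cont.intervalIntegrable a0 U)).symm
    have hint : IntegrableOn hσ (Ioi U) := by
      apply integrableOn_Ioi_of_intervalIntegral_norm_bounded (T - Hs U) U
        (fun n : ℕ => hσ_cont.integrableOn_Ioc)
        (tendsto_atTop_add_const_left atTop U tendsto_natCast_atTop_atTop)
      refine Filter.Eventually.of_forall (fun n => ?_)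
      have hnorm : (∫ x in U..(U + (n:ℝ)), ‖hσ x‖) = ∫ x in U..(U + (n:ℝ)), hσ x :=
        intervalIntegral.integral_congr (fun x _ => Real.norm_of_nonneg (hσ_nonneg x))
      rw [hnorm, hHsU]
      linarith [hkey (U + (n:ℝ))]
    have hfin : (∫⁻ s in Ioi U, ENNReal.ofReal (hσ s)) < ⊤ := by
      have h2 : (∫⁻ s in Ioi U, (‖hσ s‖₊ : ENNReal)) < ⊤ := hint.2
      refine lt_of_le_of_lt (lintegral_mono fun s => ?_) h2
      exact Real.ofReal_le_enorm _
    -- pointwise bounds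
    have hbd1 : ∀ s ∈ Ioc α U,
        ENNReal.ofReal (1 / Real.sqrt (β ^ 2 + 2 * ∫ r in α..s, b r)) ≤
          ENNReal.ofReal (1 / β) := by
      intro s hs
      apply ENNReal.ofReal_le_ofReal
      have hGs : G α ≤ G s := hGmono hs.1.le
      have hden : β ^ 2 + 2 * (G s - G α) ∈ Ici (β ^ 2) := by
        simp only [mem_Ici]; linarith
      rw [hD1 s]
      have hsq : β ≤ Real.sqrt (β ^ 2 + 2 * (G s - G α)) := by
        rw [show β = Real.sqrt (β ^ 2) from (Real.sqrt_sq hβ.le).symm]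
        apply Real.sqrt_le_sqrt
        rw [Real.sqrt_sq hβ.le]
        simpa using hden
      exact one_div_le_one_div_of_le hβ hsq
    have hbd2 : ∀ s ∈ Ioi U,
        ENNReal.ofReal (1 / Real.sqrt (β ^ 2 + 2 * ∫ r in α..s, b r)) ≤
          ENNReal.ofReal (2 * hσ s) := by
      intro s hs
      apply ENNReal.ofReal_le_ofReal
      have hUs : U ≤ s := (le_of_lt hs)
      have hGs : G α ≤ G s := hGmono (hαU.trans hUs)
      have hGUs : G U ≤ G s := hGmono hUs
      have habs : G α ≤ |G α| := le_abs_self _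
      have hkey2 : β ^ 2 + max (B ^ 2 + 2 * G s) 0 ≤ 4 * (β ^ 2 + 2 * (G s - G α)) := by
        have hsqβ : 0 ≤ β ^ 2 := sq_nonneg β
        rcases max_cases (B ^ 2 + 2 * G s) 0 with ⟨hm, _⟩ | ⟨hm, _⟩ <;> rw [hm]
        · rw [hL_def] at hGU
          linarith
        · linarith
      have hD1pos : 0 < β ^ 2 + 2 * (G s - G α) := by
        have := pow_pos hβ 2
        linarith
      rw [hD1 s]
      have h2 : Real.sqrt (β ^ 2 + max (B ^ 2 + 2 * G s) 0) ≤
          2 * Real.sqrt (β ^ 2 + 2 * (G s - G α)) := by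
        have hstep := Real.sqrt_le_sqrt hkey2
        rwa [show (4:ℝ) * (β ^ 2 + 2 * (G s - G α)) =
            2 ^ 2 * (β ^ 2 + 2 * (G s - G α)) by ring,
          Real.sqrt_mul (by norm_num : (0:ℝ) ≤ 2 ^ 2),
          Real.sqrt_sq (by norm_num : (0:ℝ) ≤ 2)] at hstep
      have hgoal : 1 / Real.sqrt (β ^ 2 + 2 * (G s - G α)) ≤
          2 / Real.sqrt (β ^ 2 + max (B ^ 2 + 2 * G s) 0) := by
        rw [div_le_div_iff₀ (Real.sqrt_pos.2 hD1pos) (hsqrt_pos s), one_mul]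
        linarith
      calc 1 / Real.sqrt (β ^ 2 + 2 * (G s - G α))
          ≤ 2 / Real.sqrt (β ^ 2 + max (B ^ 2 + 2 * G s) 0) := hgoal
        _ = 2 * hσ s := by rw [hσ_def, mul_one_div]
    -- assemble
    have hsplit : Ioi α = Ioc α U ∪ Ioi U := (Ioc_union_Ioi_eq_Ioi hαU).symm
    rw [blowupTime, hsplit, lintegral_union measurableSet_Ioi Ioc_disjoint_Ioi_same]
    apply ENNReal.add_lt_top.2
    constructor
    · calc (∫⁻ s in Ioc α U,
            ENNReal.ofReal (1 / Real.sqrt (β ^ 2 + 2 * ∫ r in α..s, b r)))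
          ≤ ∫⁻ _ in Ioc α U, ENNReal.ofReal (1 / β) :=
            setLIntegral_mono' measurableSet_Ioc hbd1
        _ = ENNReal.ofReal (1 / β) * volume (Ioc α U) := setLIntegral_const _ _
        _ < ⊤ := ENNReal.mul_lt_top ENNReal.ofReal_lt_top (measure_Ioc_lt_top)
    · calc (∫⁻ s in Ioi U,
            ENNReal.ofReal (1 / Real.sqrt (β ^ 2 + 2 * ∫ r in α..s, b r)))
          ≤ ∫⁻ s in Ioi U, ENNReal.ofReal (2 * hσ s) :=
            setLIntegral_mono' measurableSet_Ioi hbd2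
        _ = 2 * ∫⁻ s in Ioi U, ENNReal.ofReal (hσ s) := by
            have hmeas : Measurable fun s : ℝ => ENNReal.ofReal (hσ s) :=
              ENNReal.measurable_ofReal.comp hσ_cont.measurable
            simp_rw [ENNReal.ofReal_mul (by norm_num : (0:ℝ) ≤ 2)]
            rw [lintegral_const_mul _ hmeas]
            congr 1
            norm_num
        _ < ⊤ := ENNReal.mul_lt_top (by norm_num) hfin
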